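/- For fixed k ≥ 1 and every graph G of order n ≥ 2k+1, |μₖ(G)| + |μₖ(Ḡ)| < √(2/k)·n, where μₖ denotes the k-th largest adjacency eigenvalue. -/

import Mathlib

open Matrix SimpleGraph

lemma trace_mul_self_eq_sum_sq {m : ℕ} {A : Matrix (Fin m) (Fin m) ℝ} (hA : A.IsHermitian) :
    (A * A).trace = ∑ i, hA.eigenvalues i ^ 2 := by
  conv_lhs => rw [hA.spectral_theorem, Unitary.conjStarAlgAut_apply]
  set U := (hA.eigenvectorUnitary : Matrix (Fin m) (Fin m) ℝ) with hU
  set D := Matrix.diagonal ((RCLike.ofReal ∘ hA.eigenvalues : Fin m → ℝ)) with hD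
  have h1 : star U * U = 1 := Matrix.mem_unitaryGroup_iff'.mp hA.eigenvectorUnitary.2
  have h2 : U * D * star U * (U * D * star U) = U * (D * D) * star U := by
    rw [mul_assoc (U * D), ← mul_assoc (star U) (U * D), ← mul_assoc (star U) U D, h1, one_mul,
      ← mul_assoc, ← mul_assoc, mul_assoc U D]
  rw [h2, Matrix.trace_mul_cycle, ← mul_assoc, h1, one_mul, hD,
    Matrix.diagonal_mul_diagonal, Matrix.trace_diagonal]
  simp [sq]

lemma aux_sorted_bound {m k : ℕ} (g : Fin m → ℝ) (hg : Antitone g) (hk : 1 ≤ k)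
    (hkm : 2 * k ≤ m) (h' : k - 1 < m) :
    (k : ℝ) * g ⟨k - 1, h'⟩ ^ 2 ≤ ∑ i, g i ^ 2 := by
  set x := g ⟨k - 1, h'⟩ with hx
  have hbase : ∀ S : Finset (Fin m), (∀ i ∈ S, x ^ 2 ≤ g i ^ 2) → k ≤ S.card →
      (k : ℝ) * x ^ 2 ≤ ∑ i, g i ^ 2 := by
    intro S hS hcard
    have h1 : (k : ℝ) * x ^ 2 ≤ (S.card : ℝ) * x ^ 2 := by
      apply mul_le_mul_of_nonneg_right _ (sq_nonneg x)
      exact_mod_cast hcard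
    have h2 : (S.card : ℝ) * x ^ 2 ≤ ∑ i ∈ S, g i ^ 2 := by
      have := Finset.card_nsmul_le_sum S (fun i => g i ^ 2) (x ^ 2) hS
      simpa [nsmul_eq_mul] using this
    have h3 : ∑ i ∈ S, g i ^ 2 ≤ ∑ i, g i ^ 2 :=
      Finset.sum_le_sum_of_subset_of_nonneg (Finset.subset_univ S) (fun i _ _ => sq_nonneg _)
    linarith
  by_cases hx0 : 0 ≤ x
  · refine hbase (Finset.Iic ⟨k - 1, h'⟩) ?_ ?_
    · intro i hi
      have hgi : x ≤ g i := hg (Finset.mem_Iic.mp hi)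
      nlinarith
    · rw [Fin.card_Iic]
      show k ≤ k - 1 + 1
      omega
  · push_neg at hx0
    refine hbase (Finset.Ici ⟨k - 1, h'⟩) ?_ ?_
    · intro i hi
      have hgi : g i ≤ x := hg (Finset.mem_Ici.mp hi)
      nlinarith
    · rw [Fin.card_Ici]
      show k ≤ m - (k - 1)
      omega

/-- The eigenvalues of the adjacency matrix of `G`, in descending order:
`graphEig G i` is the `(i+1)`-th largest eigenvalue. -/
noncomputable def graphEig {n : ℕ} (G : SimpleGraph (Fin n)) (i : Fin n) : ℝ :=
  letI := Classical.decRel G.Adj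
  letI hH : (G.adjMatrix ℝ).IsHermitian := by rw [Matrix.IsHermitian, conjTranspose_eq_transpose_of_trivial]; exact G.isSymm_adjMatrix
  hH.eigenvalues (Tuple.sort hH.eigenvalues i.rev)

lemma graphEig_antitone {n : ℕ} (G : SimpleGraph (Fin n)) : Antitone (graphEig G) := by
  intro i j hij
  letI := Classical.decRel G.Adj
  letI hH : (G.adjMatrix ℝ).IsHermitian := by rw [Matrix.IsHermitian, conjTranspose_eq_transpose_of_trivial]; exact G.isSymm_adjMatrix
  exact Tuple.monotone_sort hH.eigenvalues (Fin.rev_le_rev.mpr hij)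

lemma graphEig_sum_sq {n : ℕ} (G : SimpleGraph (Fin n)) :
    letI := Classical.decRel G.Adj
    ∑ i, graphEig G i ^ 2 = (G.adjMatrix ℝ * G.adjMatrix ℝ).trace := by
  letI := Classical.decRel G.Adj
  letI hH : (G.adjMatrix ℝ).IsHermitian := by rw [Matrix.IsHermitian, conjTranspose_eq_transpose_of_trivial]; exact G.isSymm_adjMatrix
  rw [trace_mul_self_eq_sum_sq hH]
  exact Equiv.sum_comp (Fin.revPerm.trans (Tuple.sort hH.eigenvalues))
    (fun i => hH.eigenvalues i ^ 2)

theorem stmt14 (k n : ℕ) (hk : 1 ≤ k) (hn : 2 * k + 1 ≤ n) (G : SimpleGraph (Fin n)) :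
    |graphEig G ⟨k - 1, by omega⟩| + |graphEig Gᶜ ⟨k - 1, by omega⟩| <
      Real.sqrt (2 / k) * n := by
  letI := Classical.decRel G.Adj
  letI := Classical.decRel Gᶜ.Adj
  set a := graphEig G ⟨k - 1, by omega⟩ with ha
  set b := graphEig Gᶜ ⟨k - 1, by omega⟩ with hb
  have h1 : (k : ℝ) * a ^ 2 ≤ ∑ i, graphEig G i ^ 2 :=
    aux_sorted_bound _ (graphEig_antitone G) hk (by omega) (by omega)
  have h2 : (k : ℝ) * b ^ 2 ≤ ∑ i, graphEig Gᶜ i ^ 2 :=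
    aux_sorted_bound _ (graphEig_antitone Gᶜ) hk (by omega) (by omega)
  have hs1 := graphEig_sum_sq G
  have hs2 := graphEig_sum_sq Gᶜ
  -- sum of two traces = n * (n - 1)
  have htr : (G.adjMatrix ℝ * G.adjMatrix ℝ).trace
      + (Gᶜ.adjMatrix ℝ * Gᶜ.adjMatrix ℝ).trace = (n : ℝ) * ((n : ℝ) - 1) := by
    simp only [Matrix.trace, Matrix.diag, Matrix.mul_apply, SimpleGraph.adjMatrix_apply]
    rw [← Finset.sum_add_distrib]
    have key : ∀ i : Fin n,
        ((∑ j, (if G.Adj i j then (1:ℝ) else 0) * (if G.Adj j i then (1:ℝ) else 0))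
        + ∑ j, (if Gᶜ.Adj i j then (1:ℝ) else 0) * (if Gᶜ.Adj j i then (1:ℝ) else 0))
        = (n : ℝ) - 1 := by
      intro i
      rw [← Finset.sum_add_distrib]
      have : ∀ j : Fin n,
          ((if G.Adj i j then (1:ℝ) else 0) * (if G.Adj j i then (1:ℝ) else 0)
          + (if Gᶜ.Adj i j then (1:ℝ) else 0) * (if Gᶜ.Adj j i then (1:ℝ) else 0))
          = if i = j then 0 else 1 := by
        intro j
        by_cases hij : i = j
        · subst hij; simp [G.loopless.irrefl i, Gᶜ.loopless.irrefl i]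
        · by_cases hadj : G.Adj i j
          · have h1 : G.Adj j i := hadj.symm
            have h2 : ¬ Gᶜ.Adj i j := by simp [SimpleGraph.compl_adj, hadj]
            simp [hadj, h1, h2, hij]
          · have h2 : Gᶜ.Adj i j := by simp [SimpleGraph.compl_adj, hij, hadj]
            simp [hadj, fun h : G.Adj j i => hadj h.symm, h2, h2.symm, hij]
      rw [Finset.sum_congr rfl (fun j _ => this j)]
      have h01 : ∀ j : Fin n, (if i = j then (0:ℝ) else 1) = 1 - (if i = j then 1 else 0) := by
        intro j; split <;> norm_num
      rw [Finset.sum_congr rfl (fun j _ => h01 j), Finset.sum_sub_distrib, Finset.sum_const,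
        Finset.sum_ite_eq, Finset.card_univ, Fintype.card_fin]
      simp
    rw [Finset.sum_congr rfl (fun i _ => key i)]
    rw [Finset.sum_const, Finset.card_univ, Fintype.card_fin, nsmul_eq_mul]
  have hsum : (k : ℝ) * a ^ 2 + (k : ℝ) * b ^ 2 ≤ (n : ℝ) * ((n : ℝ) - 1) := by
    rw [← htr, ← hs1, ← hs2]; linarith
  have hkR : (0:ℝ) < k := by exact_mod_cast hk
  have hnR : (0:ℝ) < n := by exact_mod_cast (by omega : 0 < n)
  have hc0 : 0 < Real.sqrt (2 / k) * n := by
    apply mul_pos (Real.sqrt_pos.mpr (by positivity)) hnR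
  have hab : (|a| + |b|) ^ 2 < (Real.sqrt (2 / k) * n) ^ 2 := by
    have hsq : (Real.sqrt (2 / k)) ^ 2 = 2 / k := Real.sq_sqrt (by positivity)
    have h2ab : (|a| + |b|) ^ 2 ≤ 2 * (a ^ 2 + b ^ 2) := by
      nlinarith [sq_nonneg (|a| - |b|), sq_abs a, sq_abs b]
    rw [mul_pow, hsq, div_mul_eq_mul_div, lt_div_iff₀ hkR]
    nlinarith
  exact lt_of_pow_lt_pow_left₀ 2 (le_of_lt hc0) hab
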